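/- Let x be a unit vector in C^n, V a subspace of C^n, and define sin∠(V, x) = ‖(I - P_V)x‖. Let u, ũ be vectors not in V, V₊ = V ⊕ span{(I - P_V)u} and Ṽ₊ = V ⊕ span{(I - P_V)ũ}, δ = sin∠(V₊, x)/sin∠(V, x), δ̃ = sin∠(Ṽ₊, x)/sin∠(V, x), and ε̃ = ‖(I - P_V)(ũ - u)‖/‖(I - P_V)u‖. Assume sin∠(V, x) ≠ 0 and δ > 0. Then |δ - δ̃|/δ ≤ 2ε̃/δ. -/

import Mathlib

open scoped InnerProductSpace ComplexConjugate

variable {E : Type*} [NormedAddCommGroup E] [InnerProductSpace ℂ E]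

/-- Pythagoras-based minimality of projection onto a line. -/
lemma line_proj_min (r p : E) (hp : p ≠ 0) (z : ℂ) :
    ‖r - ((⟪p, r⟫_ℂ / (‖p‖ ^ 2 : ℂ)) • p)‖ ≤ ‖r - z • p‖ := by
  set c : ℂ := ⟪p, r⟫_ℂ / (‖p‖ ^ 2 : ℂ) with hc
  have hpn : (‖p‖ ^ 2 : ℂ) ≠ 0 := by
    exact_mod_cast pow_ne_zero 2 (norm_ne_zero_iff.2 hp)
  have horth : ⟪r - c • p, (c - z) • p⟫_ℂ = 0 := by
    have h1 : ⟪r - c • p, p⟫_ℂ = 0 := by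
      rw [inner_sub_left, inner_smul_left, inner_self_eq_norm_sq_to_K]
      rw [hc]
      rw [← inner_conj_symm p r]
      simp only [map_div₀, map_pow, Complex.conj_conj, Complex.conj_ofReal]
      simp [hp]
    rw [inner_smul_right, h1, mul_zero]
  have heq : r - z • p = (r - c • p) + (c - z) • p := by
    rw [sub_smul]; abel
  have key := norm_add_sq_eq_norm_sq_add_norm_sq_of_inner_eq_zero _ _ horth
  rw [heq]
  nlinarith [norm_nonneg (r - c • p + (c - z) • p), norm_nonneg (r - c • p), norm_nonneg ((c - z) • p)]

/-- Projection onto `V ⊔ span p` for `p ∈ Vᗮ`. -/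
lemma proj_sup_span (V : Submodule ℂ E) [Submodule.HasOrthogonalProjection V] (p x : E)
    [Submodule.HasOrthogonalProjection (V ⊔ (ℂ ∙ p))]
    (hp : p ∈ Vᗮ) (hp0 : p ≠ 0) :
    (Submodule.orthogonalProjectionOnto (V ⊔ (ℂ ∙ p)) x : E) =
      (Submodule.orthogonalProjectionOnto V x : E) + (⟪p, x⟫_ℂ / (‖p‖ ^ 2 : ℂ)) • p := by
  set c : ℂ := ⟪p, x⟫_ℂ / (‖p‖ ^ 2 : ℂ) with hc
  rw [← Submodule.starProjection_apply]
  apply Submodule.eq_starProjection_of_mem_orthogonal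
  · exact Submodule.add_mem_sup (Submodule.orthogonalProjectionOnto V x).2
      (Submodule.smul_mem _ _ (Submodule.mem_span_singleton_self p))
  · rw [Submodule.mem_orthogonal]
    intro v hv
    rcases Submodule.mem_sup.1 hv with ⟨a, ha, b, hb, rfl⟩
    rcases Submodule.mem_span_singleton.1 hb with ⟨t, rfl⟩
    have hxa : ⟪a, x - ((Submodule.orthogonalProjectionOnto V x : E) + c • p)⟫_ℂ = 0 := by
      rw [show x - ((Submodule.orthogonalProjectionOnto V x : E) + c • p)
          = (x - (Submodule.orthogonalProjectionOnto V x : E)) - c • p by abel]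
      rw [inner_sub_right, inner_smul_right]
      rw [← Submodule.starProjection_apply, Submodule.inner_right_of_mem_orthogonal ha (Submodule.sub_starProjection_mem_orthogonal x),
        Submodule.inner_right_of_mem_orthogonal ha hp]
      ring
    have hxp : ⟪p, x - ((Submodule.orthogonalProjectionOnto V x : E) + c • p)⟫_ℂ = 0 := by
      rw [inner_sub_right, inner_add_right, inner_smul_right, inner_self_eq_norm_sq_to_K]
      have h2 : ⟪p, (Submodule.orthogonalProjectionOnto V x : E)⟫_ℂ = 0 :=
        Submodule.inner_left_of_mem_orthogonal (Submodule.orthogonalProjectionOnto V x).2 hp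
      have hpn : (‖p‖ ^ 2 : ℂ) ≠ 0 := by
        exact_mod_cast pow_ne_zero 2 (norm_ne_zero_iff.2 hp0)
      rw [h2, hc]
      field_simp
      simp [hp0]
    rw [inner_add_left, inner_smul_left, hxa, hxp]
    ring

lemma oneside (r p pt : E) (hp : p ≠ 0) (hpt : pt ≠ 0) :
    ‖r - (⟪pt, r⟫_ℂ / (‖pt‖ ^ 2 : ℂ)) • pt‖ ≤
      ‖r - (⟪p, r⟫_ℂ / (‖p‖ ^ 2 : ℂ)) • p‖ + ‖r‖ * (‖pt - p‖ / ‖p‖) := by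
  set c : ℂ := ⟪p, r⟫_ℂ / (‖p‖ ^ 2 : ℂ) with hc
  have hb : ‖r - (⟪pt, r⟫_ℂ / (‖pt‖ ^ 2 : ℂ)) • pt‖ ≤ ‖r - c • pt‖ :=
    line_proj_min r pt hpt c
  have hsplit : r - c • pt = (r - c • p) + c • (p - pt) := by
    rw [smul_sub]; abel
  have htri : ‖r - c • pt‖ ≤ ‖r - c • p‖ + ‖c • (p - pt)‖ := by
    rw [hsplit]; exact norm_add_le _ _
  have hpn : (0:ℝ) < ‖p‖ := norm_pos_iff.2 hp
  have hcb : ‖c‖ ≤ ‖r‖ / ‖p‖ := by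
    rw [hc]
    have hCS : ‖⟪p, r⟫_ℂ‖ ≤ ‖p‖ * ‖r‖ := norm_inner_le_norm p r
    rw [norm_div]
    have : ‖((‖p‖:ℂ) ^ 2)‖ = ‖p‖ ^ 2 := by
      rw [norm_pow, Complex.norm_real, Real.norm_of_nonneg (norm_nonneg p)]
    rw [this]
    rw [div_le_div_iff₀ (by positivity) hpn]
    calc ‖⟪p, r⟫_ℂ‖ * ‖p‖ ≤ (‖p‖ * ‖r‖) * ‖p‖ := by
          exact mul_le_mul_of_nonneg_right hCS (norm_nonneg p)
      _ = ‖r‖ * ‖p‖ ^ 2 := by ring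
  have hsm : ‖c • (p - pt)‖ ≤ ‖r‖ * (‖pt - p‖ / ‖p‖) := by
    rw [norm_smul, norm_sub_rev]
    calc ‖c‖ * ‖pt - p‖ ≤ (‖r‖ / ‖p‖) * ‖pt - p‖ :=
          mul_le_mul_of_nonneg_right hcb (norm_nonneg _)
      _ = ‖r‖ * (‖pt - p‖ / ‖p‖) := by ring
  linarith

lemma abs_bound (r p pt : E) (hp : p ≠ 0) (hpt : pt ≠ 0) :
    |‖r - (⟪p, r⟫_ℂ / (‖p‖ ^ 2 : ℂ)) • p‖ - ‖r - (⟪pt, r⟫_ℂ / (‖pt‖ ^ 2 : ℂ)) • pt‖| ≤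
      ‖r‖ * (2 * ‖pt - p‖ / ‖p‖) := by
  set a := ‖r - (⟪p, r⟫_ℂ / (‖p‖ ^ 2 : ℂ)) • p‖ with ha
  set b := ‖r - (⟪pt, r⟫_ℂ / (‖pt‖ ^ 2 : ℂ)) • pt‖ with hb
  have hpn : (0:ℝ) < ‖p‖ := norm_pos_iff.2 hp
  have hptn : (0:ℝ) < ‖pt‖ := norm_pos_iff.2 hpt
  have hrn : (0:ℝ) ≤ ‖r‖ := norm_nonneg r
  rw [abs_sub_le_iff]
  by_cases hcase : 2 * ‖pt - p‖ ≤ ‖p‖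
  · -- small perturbation case
    have h1 : b ≤ a + ‖r‖ * (‖pt - p‖ / ‖p‖) := oneside r p pt hp hpt
    have h2 : a ≤ b + ‖r‖ * (‖p - pt‖ / ‖pt‖) := oneside r pt p hpt hp
    have hnlow : ‖p‖ - ‖pt - p‖ ≤ ‖pt‖ := by
      have := norm_sub_norm_le pt p
      have h3 := abs_le.1 (abs_norm_sub_norm_le pt p)
      linarith [h3.1]
    have hpt2 : ‖p‖ / 2 ≤ ‖pt‖ := by linarith
    have hkey : ‖p - pt‖ / ‖pt‖ ≤ 2 * ‖pt - p‖ / ‖p‖ := by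
      rw [norm_sub_rev, div_le_div_iff₀ hptn hpn]
      nlinarith [mul_le_mul_of_nonneg_left hpt2 (norm_nonneg (pt - p))]
    have hkey2 : ‖pt - p‖ / ‖p‖ ≤ 2 * ‖pt - p‖ / ‖p‖ := by
      rw [div_le_div_iff₀ hpn hpn]
      nlinarith [norm_nonneg (pt - p)]
    constructor
    · nlinarith [mul_le_mul_of_nonneg_left hkey hrn]
    · nlinarith [mul_le_mul_of_nonneg_left hkey2 hrn]
  · -- large perturbation: both a,b ≤ ‖r‖ ≤ ‖r‖·(2ε)
    push_neg at hcase
    have ha1 : a ≤ ‖r‖ := by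
      have := line_proj_min r p hp 0
      simpa using this
    have hb1 : b ≤ ‖r‖ := by
      have := line_proj_min r pt hpt 0
      simpa using this
    have han : 0 ≤ a := norm_nonneg _
    have hbn : 0 ≤ b := norm_nonneg _
    have hbig : ‖r‖ ≤ ‖r‖ * (2 * ‖pt - p‖ / ‖p‖) := by
      have h1 : (1:ℝ) ≤ 2 * ‖pt - p‖ / ‖p‖ := by
        rw [le_div_iff₀ hpn]; linarith
      nlinarith
    constructor <;> linarith


/-- One-step subspace expansion comparison: with `V₊ = V ⊕ span{(I-P_V)u}` and
`Ṽ₊ = V ⊕ span{(I-P_V)ũ}`, `δ = sin∠(V₊,x)/sin∠(V,x)`, `δ̃ = sin∠(Ṽ₊,x)/sin∠(V,x)`,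
`ε̃ = ‖(I-P_V)(ũ-u)‖/‖(I-P_V)u‖`, one has `|δ - δ̃|/δ ≤ 2ε̃/δ`. -/
theorem subspace_expansion_bound (n : ℕ)
    (V : Submodule ℂ (EuclideanSpace ℂ (Fin n)))
    (x u utilde : EuclideanSpace ℂ (Fin n)) (hx : ‖x‖ = 1)
    (hu : u - (Submodule.orthogonalProjectionOnto V u : EuclideanSpace ℂ (Fin n)) ≠ 0)
    (hut : utilde - (Submodule.orthogonalProjectionOnto V utilde : EuclideanSpace ℂ (Fin n)) ≠ 0)
    (Vplus Vtplus : Submodule ℂ (EuclideanSpace ℂ (Fin n)))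
    (hVplus : Vplus = V ⊔ (ℂ ∙ (u - (Submodule.orthogonalProjectionOnto V u : EuclideanSpace ℂ (Fin n)))))
    (hVtplus : Vtplus =
      V ⊔ (ℂ ∙ (utilde - (Submodule.orthogonalProjectionOnto V utilde : EuclideanSpace ℂ (Fin n)))))
    (hsin : ‖x - (Submodule.orthogonalProjectionOnto V x : EuclideanSpace ℂ (Fin n))‖ ≠ 0)
    (δ δt εt : ℝ)
    (hδ : δ = ‖x - (Submodule.orthogonalProjectionOnto Vplus x : EuclideanSpace ℂ (Fin n))‖ /
      ‖x - (Submodule.orthogonalProjectionOnto V x : EuclideanSpace ℂ (Fin n))‖)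
    (hδt : δt = ‖x - (Submodule.orthogonalProjectionOnto Vtplus x : EuclideanSpace ℂ (Fin n))‖ /
      ‖x - (Submodule.orthogonalProjectionOnto V x : EuclideanSpace ℂ (Fin n))‖)
    (hεt : εt = ‖(utilde - (Submodule.orthogonalProjectionOnto V utilde : EuclideanSpace ℂ (Fin n))) -
        (u - (Submodule.orthogonalProjectionOnto V u : EuclideanSpace ℂ (Fin n)))‖ /
      ‖u - (Submodule.orthogonalProjectionOnto V u : EuclideanSpace ℂ (Fin n))‖)
    (hδpos : 0 < δ) :
    |δ - δt| / δ ≤ 2 * εt / δ := by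
  set p : EuclideanSpace ℂ (Fin n) := u - (Submodule.orthogonalProjectionOnto V u : EuclideanSpace ℂ (Fin n))
    with hpdef
  set pt : EuclideanSpace ℂ (Fin n) :=
    utilde - (Submodule.orthogonalProjectionOnto V utilde : EuclideanSpace ℂ (Fin n)) with hptdef
  set r : EuclideanSpace ℂ (Fin n) := x - (Submodule.orthogonalProjectionOnto V x : EuclideanSpace ℂ (Fin n))
    with hrdef
  have hpV : p ∈ Vᗮ := Submodule.sub_starProjection_mem_orthogonal u
  have hptV : pt ∈ Vᗮ := Submodule.sub_starProjection_mem_orthogonal utilde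
  have hrV : r ∈ Vᗮ := Submodule.sub_starProjection_mem_orthogonal x
  have hspos : (0:ℝ) < ‖r‖ := lt_of_le_of_ne (norm_nonneg r) (Ne.symm hsin)
  -- inner products with x equal inner products with r
  have hip : ⟪p, x⟫_ℂ = ⟪p, r⟫_ℂ := by
    rw [hrdef, inner_sub_right,
      Submodule.inner_left_of_mem_orthogonal (Submodule.orthogonalProjectionOnto V x).2 hpV, sub_zero]
  have hipt : ⟪pt, x⟫_ℂ = ⟪pt, r⟫_ℂ := by
    rw [hrdef, inner_sub_right,
      Submodule.inner_left_of_mem_orthogonal (Submodule.orthogonalProjectionOnto V x).2 hptV, sub_zero]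
  -- explicit projections
  have hproj : x - (Submodule.orthogonalProjectionOnto Vplus x : EuclideanSpace ℂ (Fin n)) =
      r - (⟪p, r⟫_ℂ / (‖p‖ ^ 2 : ℂ)) • p := by
    rw [hVplus, proj_sup_span V p x hpV hu, hrdef, hip]
    abel
  have hprojt : x - (Submodule.orthogonalProjectionOnto Vtplus x : EuclideanSpace ℂ (Fin n)) =
      r - (⟪pt, r⟫_ℂ / (‖pt‖ ^ 2 : ℂ)) • pt := by
    rw [hVtplus, proj_sup_span V pt x hptV hut, hrdef, hipt]
    abel
  have hkey := abs_bound r p pt hu hut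
  rw [← hproj, ← hprojt] at hkey
  have hgoal : |δ - δt| ≤ 2 * εt := by
    rw [hδ, hδt, hεt, div_sub_div_same, abs_div, abs_of_pos hspos,
      div_le_iff₀ hspos]
    calc |‖x - (Submodule.orthogonalProjectionOnto Vplus x : EuclideanSpace ℂ (Fin n))‖ -
        ‖x - (Submodule.orthogonalProjectionOnto Vtplus x : EuclideanSpace ℂ (Fin n))‖|
        ≤ ‖r‖ * (2 * ‖pt - p‖ / ‖p‖) := hkey
      _ = 2 * (‖pt - p‖ / ‖p‖) * ‖r‖ := by ring
  rw [div_le_div_iff₀ hδpos hδpos]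
  nlinarith [abs_nonneg (δ - δt)]
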